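/- The element M^{11} = T^{11} ⊗ I_n, where T^{11} is the 4×4 matrix with entries +1 at (1,4), -1 at (2,3), -1 at (3,2), +1 at (4,1), graded-commutes with all basis elements of ℤ₂²-q(n): ⟦M^{11}, E_{ij}^β⟧ = M^{11}E_{ij}^β - ω(11,β)E_{ij}^β M^{11} = 0 for all β ∈ ℤ₂² and all i,j. -/

import Mathlib

noncomputable def Θ (α : ZMod 2 × ZMod 2) : Matrix (Fin 4) (Fin 4) ℂ :=
  if α = (0, 0) then 1
  else if α = (1, 0) then !![0,0,1,0; 0,0,0,1; 1,0,0,0; 0,1,0,0]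
  else if α = (0, 1) then !![0,1,0,0; 1,0,0,0; 0,0,0,1; 0,0,1,0]
  else !![0,0,0,1; 0,0,1,0; 0,1,0,0; 1,0,0,0]

noncomputable def T11 : Matrix (Fin 4) (Fin 4) ℂ :=
  !![0,0,0,1; 0,0,-1,0; 0,-1,0,0; 1,0,0,0]

def ω22 (α β : ZMod 2 × ZMod 2) : ℂ := (-1 : ℂ) ^ ((α.1 * β.1 + α.2 * β.2 : ZMod 2)).val

noncomputable def Eqn (n : ℕ) (α : ZMod 2 × ZMod 2) (i j : Fin n) :
    Matrix (Fin 4 × Fin n) (Fin 4 × Fin n) ℂ :=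
  Matrix.kroneckerMap (· * ·) (Θ α) (Matrix.single i j (1 : ℂ))

/-- M^{11} = T^{11} ⊗ I_n. -/
noncomputable def M11 (n : ℕ) : Matrix (Fin 4 × Fin n) (Fin 4 × Fin n) ℂ :=
  Matrix.kroneckerMap (· * ·) T11 (1 : Matrix (Fin n) (Fin n) ℂ)

lemma Θ00 : Θ (0,0) = 1 := by norm_num [Θ]

lemma Θ10 : Θ (1,0) = !![0,0,1,0; 0,0,0,1; 1,0,0,0; 0,1,0,0] := by
  norm_num [Θ, Prod.ext_iff]

lemma Θ01 : Θ (0,1) = !![0,1,0,0; 1,0,0,0; 0,0,0,1; 0,0,1,0] := by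
  norm_num [Θ, Prod.ext_iff]

lemma Θ11 : Θ (1,1) = !![0,0,0,1; 0,0,1,0; 0,1,0,0; 1,0,0,0] := by
  norm_num [Θ, Prod.ext_iff]

lemma ω00 : ω22 (1,1) (0,0) = 1 := by
  norm_num [ω22]

lemma ω10 : ω22 (1,1) (1,0) = -1 := by
  norm_num [ω22, ZMod.val_one]

lemma ω01 : ω22 (1,1) (0,1) = -1 := by
  norm_num [ω22, ZMod.val_one]

lemma ω11 : ω22 (1,1) (1,1) = 1 := by
  norm_num [ω22]
  rw [show ZMod.val (2 : ZMod 2) = 0 from by decide]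
  norm_num

lemma key (β : ZMod 2 × ZMod 2) : T11 * Θ β = ω22 (1, 1) β • (Θ β * T11) := by
  have hβ : β = (0,0) ∨ β = (1,0) ∨ β = (0,1) ∨ β = (1,1) := by
    rcases β with ⟨a, b⟩
    fin_cases a <;> fin_cases b <;> decide
  rcases hβ with h | h | h | h <;> subst h
  · rw [Θ00, ω00, one_smul, mul_one, one_mul]
  · rw [Θ10, ω10, T11]
    ext a b
    fin_cases a <;> fin_cases b <;>
      simp [Matrix.mul_apply, Fin.sum_univ_four] <;> simp [Matrix.vecHead, Matrix.vecTail]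
  · rw [Θ01, ω01, T11]
    ext a b
    fin_cases a <;> fin_cases b <;>
      simp [Matrix.mul_apply, Fin.sum_univ_four] <;> simp [Matrix.vecHead, Matrix.vecTail]
  · rw [Θ11, ω11, one_smul, T11]
    ext a b
    fin_cases a <;> fin_cases b <;>
      simp [Matrix.mul_apply, Fin.sum_univ_four] <;> simp [Matrix.vecHead, Matrix.vecTail]

theorem stmt12 (n : ℕ) (β : ZMod 2 × ZMod 2) (i j : Fin n) :
    M11 n * Eqn n β i j - ω22 (1, 1) β • (Eqn n β i j * M11 n) = 0 := by
  have h1 : M11 n * Eqn n β i j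
      = Matrix.kroneckerMap (· * ·) (T11 * Θ β) (Matrix.single i j (1 : ℂ)) := by
    rw [M11, Eqn, ← Matrix.mul_kronecker_mul, one_mul]
  have h2 : Eqn n β i j * M11 n
      = Matrix.kroneckerMap (· * ·) (Θ β * T11) (Matrix.single i j (1 : ℂ)) := by
    rw [M11, Eqn, ← Matrix.mul_kronecker_mul, mul_one]
  rw [h1, h2, key β, sub_eq_zero, Matrix.smul_kronecker]
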